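/- Consider the SAP iteration: let A be a real m×n matrix, x ∈ ℝⁿ, b = A·x with Aᵀ·b ≠ 0, and let A₁, …, A_k be submatrices of A formed by groups of rows of A whose union comprises all rows of A. Define x₀ = (‖b‖²/‖Aᵀ·b‖²)·(Aᵀ·b), and for each s ≥ 0 define recursively p⁽ˢ⁾₀ = x_s and, for i = 1, …, k, p⁽ˢ⁾ᵢ = the orthogonal projection of x onto the subspace spanned by p⁽ˢ⁾ᵢ₋₁ together with the rows of Aᵢ; set x_{s+1} = p⁽ˢ⁾_k. Let x̄ be the orthogonal projection of x onto the row space of A. If (y_s) is any convergent subsequence of (x_s), then lim_{s→∞} y_s = x̄. -/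

import Mathlib

open scoped RealInnerProductSpace
open Matrix Filter Topology

/-- The subspace spanned by a vector `q` together with the rows of the block of
`A` indexed by `g i`. -/
def sapBlockSubspace {m n : ℕ} (A : Matrix (Fin m) (Fin n) ℝ)
    (g : ℕ → Set (Fin m)) (q : EuclideanSpace ℝ (Fin n)) (i : ℕ) :
    Submodule ℝ (EuclideanSpace ℝ (Fin n)) :=
  Submodule.span ℝ (insert q ((fun j : Fin m => (WithLp.toLp 2 (A j) : EuclideanSpace ℝ (Fin n))) '' g i))

/-- any convergent subsequence of the SAP iterates `(x_s)` has
limit `x̄`, the orthogonal projection of `x` onto the row space of `A`. -/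
theorem sap_subsequence_limit {m n k : ℕ}
    (A : Matrix (Fin m) (Fin n) ℝ) (x : EuclideanSpace ℝ (Fin n))
    (b : EuclideanSpace ℝ (Fin m)) (hb : b = A.mulVec x)
    (Atb : EuclideanSpace ℝ (Fin n)) (hAtb : Atb = Aᵀ.mulVec b) (hne : Atb ≠ 0)
    (g : ℕ → Set (Fin m)) (hcover : ∀ j : Fin m, ∃ i < k, j ∈ g i)
    (xseq : ℕ → EuclideanSpace ℝ (Fin n))
    (h0 : xseq 0 = (‖b‖ ^ 2 / ‖Atb‖ ^ 2) • Atb)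
    (hstep : ∀ s : ℕ, ∃ p : ℕ → EuclideanSpace ℝ (Fin n),
      p 0 = xseq s ∧ p k = xseq (s + 1) ∧
      ∀ i < k, p (i + 1) ∈ sapBlockSubspace A g (p i) i ∧
        ∀ w ∈ sapBlockSubspace A g (p i) i, ⟪x - p (i + 1), w⟫ = 0)
    (xbar : EuclideanSpace ℝ (Fin n))
    (hxbarmem : xbar ∈ Submodule.span ℝ
      (Set.range fun j : Fin m => (WithLp.toLp 2 (A j) : EuclideanSpace ℝ (Fin n))))
    (hxbarorth : ∀ w ∈ Submodule.span ℝ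
      (Set.range fun j : Fin m => (WithLp.toLp 2 (A j) : EuclideanSpace ℝ (Fin n))),
      ⟪x - xbar, w⟫ = 0)
    (φ : ℕ → ℕ) (hφ : StrictMono φ) (y : EuclideanSpace ℝ (Fin n))
    (hy : Tendsto (fun s => xseq (φ s)) atTop (𝓝 y)) :
    y = xbar := by
  classical
  set R : Submodule ℝ (EuclideanSpace ℝ (Fin n)) :=
    Submodule.span ℝ (Set.range fun j : Fin m => (WithLp.toLp 2 (A j) : EuclideanSpace ℝ (Fin n))) with hRdef
  choose p hp0 hpk hpstep using hstep
  -- all iterates lie in R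
  have hsubR : ∀ s i, p s i ∈ R → sapBlockSubspace A g (p s i) i ≤ R := by
    intro s i hmem
    apply Submodule.span_le.mpr
    rw [Set.insert_subset_iff]
    refine ⟨hmem, ?_⟩
    rintro _ ⟨j, hj, rfl⟩
    exact Submodule.subset_span ⟨j, rfl⟩
  have hmemR : ∀ s, xseq s ∈ R → ∀ i, i ≤ k → p s i ∈ R := by
    intro s h i
    induction i with
    | zero => intro _; rw [hp0]; exact h
    | succ i ih =>
      intro hik
      exact hsubR s i (ih (by omega)) ((hpstep s i (by omega)).1)
  have hxmemR : ∀ s, xseq s ∈ R := by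
    intro s
    induction s with
    | zero =>
      rw [h0]
      apply Submodule.smul_mem
      have hA : Atb = ∑ j : Fin m, b j • (WithLp.toLp 2 (A j) : EuclideanSpace ℝ (Fin n)) := by
        ext i
        rw [show Atb i = (Aᵀ *ᵥ b.ofLp) i from congrFun hAtb i]
        simp [Matrix.mulVec, dotProduct, Finset.sum_apply, Matrix.transpose_apply,
          mul_comm]
      rw [hA]
      exact Submodule.sum_mem _ fun j _ =>
        Submodule.smul_mem _ _ (Submodule.subset_span ⟨j, rfl⟩)
    | succ s ih =>
      rw [← hpk s]
      exact hmemR s ih k le_rfl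
  -- Pythagoras within a sweep
  have hq_self : ∀ s i, p s i ∈ sapBlockSubspace A g (p s i) i :=
    fun s i => Submodule.subset_span (Set.mem_insert _ _)
  have hpyth : ∀ s, ∀ i < k,
      ‖x - p s i‖ ^ 2 = ‖x - p s (i + 1)‖ ^ 2 + ‖p s (i + 1) - p s i‖ ^ 2 := by
    intro s i hi
    have horth := (hpstep s i hi).2 (p s (i + 1) - p s i)
      (Submodule.sub_mem _ (hpstep s i hi).1 (hq_self s i))
    have key : x - p s i = (x - p s (i + 1)) + (p s (i + 1) - p s i) := by abel
    rw [key, norm_add_sq_real, horth]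
    ring
  have hqmono : ∀ s, ∀ i j, i ≤ j → j ≤ k → ‖x - p s j‖ ^ 2 ≤ ‖x - p s i‖ ^ 2 := by
    intro s i j hij hjk
    induction j, hij using Nat.le_induction with
    | base => exact le_rfl
    | succ j hij ih =>
      have h1 := hpyth s j (by omega)
      have h2 := ih (by omega)
      nlinarith [sq_nonneg ‖p s (j + 1) - p s j‖]
  set G : ℕ → ℝ := fun s => ‖x - xseq s‖ ^ 2 with hGdef
  have hGsucc : ∀ s, G (s + 1) ≤ G s := by
    intro s
    have := hqmono s 0 k (Nat.zero_le k) le_rfl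
    rw [hp0, hpk] at this
    exact this
  have hGanti : Antitone G := antitone_nat_of_succ_le hGsucc
  have hGnonneg : ∀ s, 0 ≤ G s := fun s => sq_nonneg _
  obtain ⟨L, hGL⟩ : ∃ L, Tendsto G atTop (𝓝 L) :=
    ⟨_, tendsto_atTop_ciInf hGanti ⟨0, by rintro z ⟨s, rfl⟩; exact hGnonneg s⟩⟩
  have hφ1 : Tendsto (fun s => G (φ s)) atTop (𝓝 L) := hGL.comp hφ.tendsto_atTop
  have hφ1' : Tendsto (fun s => G (φ (s + 1))) atTop (𝓝 L) :=
    hφ1.comp (tendsto_add_atTop_nat 1)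
  have hφ2 : Tendsto (fun s => G (φ s + 1)) atTop (𝓝 L) := by
    refine tendsto_of_tendsto_of_tendsto_of_le_of_le hφ1' hφ1 ?_ ?_
    · intro s
      exact hGanti (Nat.succ_le_of_lt (hφ (Nat.lt_succ_self s)))
    · intro s
      exact hGanti (Nat.le_succ _)
  have hdiff0 : Tendsto (fun s => G (φ s) - G (φ s + 1)) atTop (𝓝 0) := by
    have := hφ1.sub hφ2
    simpa using this
  have hstepbound : ∀ s, ∀ i < k, ‖p s (i + 1) - p s i‖ ^ 2 ≤ G s - G (s + 1) := by
    intro s i hi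
    have h1 : ‖x - p s k‖ ^ 2 ≤ ‖x - p s (i + 1)‖ ^ 2 := hqmono s (i + 1) k hi le_rfl
    have h2 : ‖x - p s i‖ ^ 2 ≤ ‖x - p s 0‖ ^ 2 :=
      hqmono s 0 i (Nat.zero_le i) (le_of_lt hi)
    have h3 := hpyth s i hi
    have e0 : p s 0 = xseq s := hp0 s
    have ek : p s k = xseq (s + 1) := hpk s
    have hG1 : G s = ‖x - p s 0‖ ^ 2 := by rw [hGdef, e0]
    have hG2 : G (s + 1) = ‖x - p s k‖ ^ 2 := by rw [hGdef, ek]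
    rw [hG1, hG2]
    nlinarith
  have hinc0 : ∀ i, i < k → Tendsto (fun s => p (φ s) (i + 1) - p (φ s) i) atTop (𝓝 0) := by
    intro i hi
    rw [tendsto_zero_iff_norm_tendsto_zero]
    have hsq : Tendsto (fun s => ‖p (φ s) (i + 1) - p (φ s) i‖ ^ 2) atTop (𝓝 0) :=
      tendsto_of_tendsto_of_tendsto_of_le_of_le tendsto_const_nhds hdiff0
        (fun s => sq_nonneg _) (fun s => hstepbound (φ s) i hi)
    have hsqrt := hsq.sqrt
    simp only [Real.sqrt_sq (norm_nonneg _), Real.sqrt_zero] at hsqrt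
    exact hsqrt
  have hlim : ∀ i, i ≤ k → Tendsto (fun s => p (φ s) i) atTop (𝓝 y) := by
    intro i
    induction i with
    | zero =>
      intro _
      simpa only [hp0] using hy
    | succ i ih =>
      intro hik
      have h1 := (ih (by omega)).add (hinc0 i (by omega))
      have heq : (fun s => p (φ s) i + (p (φ s) (i + 1) - p (φ s) i))
          = fun s => p (φ s) (i + 1) := by
        funext s; abel
      rw [heq, add_zero] at h1
      exact h1
  have hrow : ∀ j : Fin m, ⟪x - y, (WithLp.toLp 2 (A j) : EuclideanSpace ℝ (Fin n))⟫ = 0 := by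
    intro j
    obtain ⟨i, hik, hji⟩ := hcover j
    have hz : ∀ s, ⟪x - p (φ s) (i + 1), (WithLp.toLp 2 (A j) : EuclideanSpace ℝ (Fin n))⟫ = 0 :=
      fun s => (hpstep (φ s) i hik).2 _
        (Submodule.subset_span (Set.mem_insert_of_mem _ ⟨j, hji, rfl⟩))
    have hcont : Tendsto (fun s => ⟪x - p (φ s) (i + 1), (WithLp.toLp 2 (A j) : EuclideanSpace ℝ (Fin n))⟫)
        atTop (𝓝 ⟪x - y, (WithLp.toLp 2 (A j) : EuclideanSpace ℝ (Fin n))⟫) :=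
      Tendsto.inner (tendsto_const_nhds.sub (hlim (i + 1) hik)) tendsto_const_nhds
    have hzz : Tendsto (fun _ : ℕ => (0 : ℝ)) atTop
        (𝓝 ⟪x - y, (WithLp.toLp 2 (A j) : EuclideanSpace ℝ (Fin n))⟫) := by
      simpa only [hz] using hcont
    exact (tendsto_nhds_unique tendsto_const_nhds hzz).symm
  have horthR : ∀ w ∈ R, ⟪x - y, w⟫ = 0 := by
    intro w hw
    induction hw using Submodule.span_induction with
    | mem w hw => obtain ⟨j, rfl⟩ := hw; exact hrow j
    | zero => simp
    | add a b _ _ ha hb => rw [inner_add_right, ha, hb, add_zero]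
    | smul c a _ ha => rw [real_inner_smul_right, ha, mul_zero]
  have hyR : y ∈ R :=
    R.closed_of_finiteDimensional.mem_of_tendsto hy
      (Filter.Eventually.of_forall fun s => hxmemR (φ s))
  have hd : y - xbar ∈ R := Submodule.sub_mem _ hyR hxbarmem
  have h1 : ⟪x - y, y - xbar⟫ = 0 := horthR _ hd
  have h2 : ⟪x - xbar, y - xbar⟫ = 0 := hxbarorth _ hd
  have hzero : ⟪y - xbar, y - xbar⟫ = (0 : ℝ) := by
    have hcalc : (x - xbar) - (x - y) = y - xbar := by abel
    have hstep2 : ⟪(x - xbar) - (x - y), y - xbar⟫ = (0 : ℝ) := by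
      rw [inner_sub_left, h1, h2, sub_zero]
    rwa [hcalc] at hstep2
  exact sub_eq_zero.mp (inner_self_eq_zero.mp hzero)
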